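/- Let G be the graph obtained from the k×k grid graph by adding two additional universal vertices x and y, each adjacent to all grid vertices and to each other. Let A and B be the two bipartition classes of the k×k grid, and set Z₁ := A ∪ {x} and Z₂ := B ∪ {y}. Then the graph G/Z_i obtained by contracting each connected component of G[Z_i] to a single vertex has treewidth at most 2, for both i ∈ {1,2}. -/

import Mathlib

/-- A rooted tree decomposition of a graph `G`.  The rooted tree on the index type `ι` is
given by a parent function together with a root which every node reaches by iterating
`parent`.  The bags satisfy the usual covering, edge and (subtree-)connectivity axioms;
the connectivity axiom is phrased for rooted trees: if `v` lies in the bag of `t` but not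
in the bag of its parent (and `t` is not the root), then every node whose bag contains `v`
is a descendant of `t`. -/
structure RootedTreeDecomp (V : Type*) (ι : Type*) (G : SimpleGraph V) where
  parent : ι → ι
  root : ι
  parent_root : parent root = root
  reaches_root : ∀ t : ι, ∃ n : ℕ, parent^[n] t = root
  bag : ι → Set V
  bag_cover : ∀ v : V, ∃ t : ι, v ∈ bag t
  bag_edge : ∀ ⦃u v : V⦄, G.Adj u v → ∃ t : ι, u ∈ bag t ∧ v ∈ bag t
  bag_conn : ∀ (v : V) (t : ι), v ∈ bag t → t ≠ root → v ∉ bag (parent t) →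
      ∀ s : ι, v ∈ bag s → ∃ n : ℕ, parent^[n] s = t

namespace RootedTreeDecomp

variable {V ι : Type*} {G : SimpleGraph V}

open Classical

/-- The adhesion `σ(t) = β(t) ∩ β(parent t)`, with `σ(root) = ∅`. -/
noncomputable def adhesion (D : RootedTreeDecomp V ι G) (t : ι) : Set V :=
  if t = D.root then ∅ else D.bag t ∩ D.bag (D.parent t)

/-- `s` is a child of `t` in the rooted tree. -/
def IsChild (D : RootedTreeDecomp V ι G) (s t : ι) : Prop :=
  s ≠ D.root ∧ D.parent s = t

/-- The set `γ(t)`: the union of the bags over the subtree rooted at `t`. -/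
def subtreeBags (D : RootedTreeDecomp V ι G) (t : ι) : Set V :=
  ⋃ s ∈ {s : ι | ∃ n : ℕ, D.parent^[n] s = t}, D.bag s

/-- The torso of a node `t`: the graph on the bag `β(t)` (as a graph with vertex set `V`,
with all edges inside `β(t)`) obtained from `G[β(t)]` by making the adhesion `σ(s)` of every
child `s` of `t` into a clique. -/
def torso (D : RootedTreeDecomp V ι G) (t : ι) : SimpleGraph V where
  Adj u v := u ≠ v ∧ u ∈ D.bag t ∧ v ∈ D.bag t ∧
    (G.Adj u v ∨ ∃ s : ι, D.IsChild s t ∧ u ∈ D.adhesion s ∧ v ∈ D.adhesion s)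
  symm := by
    refine ⟨?_⟩
    rintro u v ⟨hne, hu, hv, h⟩
    refine ⟨hne.symm, hv, hu, ?_⟩
    rcases h with h | ⟨s, hs, h1, h2⟩
    · exact Or.inl h.symm
    · exact Or.inr ⟨s, hs, h2, h1⟩
  loopless := ⟨fun u h => h.1 rfl⟩

end RootedTreeDecomp

/-- `G` has treewidth at most `w`: it admits a (rooted) tree decomposition all of whose
bags are finite of cardinality at most `w + 1`. -/
def TreewidthLE.{u_tw} {V : Type*} (G : SimpleGraph V) (w : ℕ) : Prop :=
  ∃ (ι : Type u_tw) (D : RootedTreeDecomp V ι G),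
    ∀ t : ι, (D.bag t).Finite ∧ (D.bag t).ncard ≤ w + 1

/-- `u` and `v` lie in the same connected component of `G[Z]`. -/
def ReachIn {V : Type*} (G : SimpleGraph V) (Z : Set V) (u v : V) : Prop :=
  ∃ (hu : u ∈ Z) (hv : v ∈ Z), (G.induce Z).Reachable ⟨u, hu⟩ ⟨v, hv⟩

/-- `G'` is obtained from `G` by contracting edges, with quotient map `π` : `π` is
surjective, each fibre induces a connected subgraph of `G`, and two distinct vertices of
`G'` are adjacent exactly when some edge of `G` joins the corresponding fibres. -/
def IsContraction {V V' : Type*} (G : SimpleGraph V) (G' : SimpleGraph V') (π : V → V') :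
    Prop :=
  Function.Surjective π ∧
  (∀ a : V', (G.induce (π ⁻¹' {a})).Connected) ∧
  (∀ a b : V', G'.Adj a b ↔ a ≠ b ∧ ∃ u v : V, G.Adj u v ∧ π u = a ∧ π v = b)

/-- `G'` is the graph `G/Z` obtained from `G` by contracting every connected component of
`G[Z]` to a single vertex, with quotient map `π`: additionally to being a contraction, `π`
identifies two vertices exactly when they coincide or lie in the same connected component
of `G[Z]`. -/
def IsComponentContraction {V V' : Type*} (G : SimpleGraph V) (Z : Set V)
    (G' : SimpleGraph V') (π : V → V') : Prop :=
  Function.Surjective π ∧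
  (∀ u v : V, π u = π v ↔ u = v ∨ ReachIn G Z u v) ∧
  (∀ a b : V', G'.Adj a b ↔ a ≠ b ∧ ∃ u v : V, G.Adj u v ∧ π u = a ∧ π v = b)

/-- Distance of natural numbers (`|a - b|`). -/
def natDist (a b : ℕ) : ℕ := max a b - min a b

/-- The `k × k` grid graph together with two universal apex vertices `x = Sum.inr 0` and
`y = Sum.inr 1`, each adjacent to all grid vertices and to each other. -/
def gridApex (k : ℕ) : SimpleGraph ((Fin k × Fin k) ⊕ Fin 2) where
  Adj a b :=
    match a, b with
    | Sum.inl p, Sum.inl q => natDist p.1.val q.1.val + natDist p.2.val q.2.val = 1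
    | Sum.inl _, Sum.inr _ => True
    | Sum.inr _, Sum.inl _ => True
    | Sum.inr i, Sum.inr j => i ≠ j
  symm := by
    refine ⟨?_⟩
    rintro (p | i) (q | j) h
    · simpa [natDist, Nat.max_comm, Nat.min_comm] using h
    · trivial
    · trivial
    · exact h.symm
  loopless := by
    refine ⟨?_⟩
    rintro (p | i) h
    · simp [natDist] at h
    · exact h rfl

/-- The bipartition class `A` of the grid: grid vertices `(i,j)` with `i + j` even. -/
def gridEven (k : ℕ) : Set ((Fin k × Fin k) ⊕ Fin 2) :=
  {x | ∃ p : Fin k × Fin k, x = Sum.inl p ∧ (p.1.val + p.2.val) % 2 = 0}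

/-- The bipartition class `B` of the grid: grid vertices `(i,j)` with `i + j` odd. -/
def gridOdd (k : ℕ) : Set ((Fin k × Fin k) ⊕ Fin 2) :=
  {x | ∃ p : Fin k × Fin k, x = Sum.inl p ∧ (p.1.val + p.2.val) % 2 = 1}

/-- `Z₁ = A ∪ {x}`. -/
def Zone (k : ℕ) : Set ((Fin k × Fin k) ⊕ Fin 2) := gridEven k ∪ {Sum.inr 0}

/-- `Z₂ = B ∪ {y}`. -/
def Ztwo (k : ℕ) : Set ((Fin k × Fin k) ⊕ Fin 2) := gridOdd k ∪ {Sum.inr 1}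

lemma gridApex_adj_parity {k : ℕ} {p q : Fin k × Fin k}
    (h : (gridApex k).Adj (Sum.inl p) (Sum.inl q)) :
    (p.1.val + p.2.val) % 2 ≠ (q.1.val + q.2.val) % 2 := by
  change natDist p.1.val q.1.val + natDist p.2.val q.2.val = 1 at h
  unfold natDist at h
  omega

theorem treewidth_helper (k : ℕ) (r : Fin 2) (Z : Set ((Fin k × Fin k) ⊕ Fin 2))
    (hZ : ∀ v, v ∈ Z ↔
      (∃ p : Fin k × Fin k, v = Sum.inl p ∧ (p.1.val + p.2.val) % 2 = r.val) ∨ v = Sum.inr r)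
    (V' : Type) (G' : SimpleGraph V') (π : ((Fin k × Fin k) ⊕ Fin 2) → V')
    (hc : IsComponentContraction (gridApex k) Z G' π) :
    TreewidthLE G' 2 := by
  obtain ⟨hsurj, hfib, hadj⟩ := hc
  set z : V' := π (Sum.inr r) with hz
  set w : V' := π (Sum.inr (r + 1)) with hw
  have hrZ : Sum.inr r ∈ Z := (hZ _).2 (Or.inr rfl)
  have hreach : ∀ u ∈ Z, ReachIn (gridApex k) Z u (Sum.inr r) := by
    intro u hu
    refine ⟨hu, hrZ, ?_⟩
    rcases (hZ u).1 hu with ⟨p, rfl, _⟩ | rfl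
    · exact SimpleGraph.Adj.reachable
        (by trivial : ((gridApex k).induce Z).Adj ⟨Sum.inl p, hu⟩ ⟨Sum.inr r, hrZ⟩)
    · exact SimpleGraph.Reachable.refl _
  have hπZ : ∀ u ∈ Z, π u = z := fun u hu => (hfib u (Sum.inr r)).2 (Or.inr (hreach u hu))
  -- every edge of `G'` has an endpoint in `{z, w}`
  have hkey : ∀ a b : V', G'.Adj a b → a = z ∨ a = w ∨ b = z ∨ b = w := by
    intro a b hab
    by_contra hcon
    push_neg at hcon
    obtain ⟨ha1, ha2, hb1, hb2⟩ := hcon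
    obtain ⟨hne, u, v, huv, hu, hv⟩ := (hadj a b).1 hab
    have hclass : ∀ (c : V') (x : (Fin k × Fin k) ⊕ Fin 2), π x = c → c ≠ z → c ≠ w →
        ∃ p : Fin k × Fin k, x = Sum.inl p ∧ (p.1.val + p.2.val) % 2 ≠ r.val := by
      intro c x hx hcz hcw
      have hxZ : x ∉ Z := fun h => hcz (hx ▸ hπZ x h)
      match x with
      | Sum.inl p =>
        exact ⟨p, rfl, fun hp => hxZ ((hZ _).2 (Or.inl ⟨p, rfl, hp⟩))⟩
      | Sum.inr i =>
        exfalso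
        have hir : i ≠ r := fun h => hxZ ((hZ _).2 (Or.inr (by rw [h])))
        have hival : i.val ≠ r.val := fun h => hir (Fin.ext h)
        have : i = r + 1 := by
          have h1 := i.isLt
          have h2 := r.isLt
          apply Fin.ext
          rw [Fin.add_def]
          simp only [Fin.val_one]
          omega
        exact hcw (hx ▸ (by rw [this]))
    obtain ⟨p, rfl, hp⟩ := hclass a u hu ha1 ha2
    obtain ⟨q, rfl, hq⟩ := hclass b v hv hb1 hb2
    have := gridApex_adj_parity huv
    omega
  -- the star tree decomposition
  classical
  refine ⟨ULift (Option V'),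
    { parent := fun _ => ⟨none⟩
      root := ⟨none⟩
      parent_root := rfl
      reaches_root := fun t => ⟨1, by simp⟩
      bag := fun t => match t.down with
        | none => {z, w}
        | some a => {z, w, a}
      bag_cover := fun v => ⟨⟨some v⟩, by simp⟩
      bag_edge := ?_
      bag_conn := ?_ }, ?_⟩
  · intro a b hab
    rcases hkey a b hab with h | h | h | h
    · exact ⟨⟨some b⟩, by simp [h]⟩
    · exact ⟨⟨some b⟩, by simp [h]⟩
    · exact ⟨⟨some a⟩, by simp [h]⟩
    · exact ⟨⟨some a⟩, by simp [h]⟩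
  · rintro v ⟨t⟩ hvt ht hvp s hvs
    cases t with
    | none => exact absurd rfl ht
    | some a =>
      simp only at hvt hvp
      have hva : v = a := by
        rcases hvt with h | h | h
        · exact absurd (by simp [h]) hvp
        · exact absurd (by simp [h]) hvp
        · exact h
      obtain ⟨s⟩ := s
      cases s with
      | none => exact absurd hvs (by simpa [hva] using hvp)
      | some b =>
        have hba : b = a := by
          rcases hvs with h | h | h
          · exact absurd (by simp [h]) hvp
          · exact absurd (by simp [h]) hvp
          · rw [← h, hva]
        exact ⟨0, by simp [hba]⟩
  · rintro ⟨t⟩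
    cases t with
    | none =>
      refine ⟨Set.Finite.insert _ (Set.finite_singleton _), ?_⟩
      calc ({z, w} : Set V').ncard ≤ ({w} : Set V').ncard + 1 := Set.ncard_insert_le _ _
        _ ≤ 3 := by simp
    | some a =>
      refine ⟨Set.Finite.insert _ (Set.Finite.insert _ (Set.finite_singleton _)), ?_⟩
      calc ({z, w, a} : Set V').ncard ≤ ({w, a} : Set V').ncard + 1 := Set.ncard_insert_le _ _
        _ ≤ ({a} : Set V').ncard + 1 + 1 := by
            exact Nat.add_le_add_right (Set.ncard_insert_le _ _) 1
        _ ≤ 3 := by simp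

/-- Let `G` be the `k × k` grid with two added universal vertices `x, y`,
let `A, B` be the bipartition classes of the grid, and `Z₁ := A ∪ {x}`, `Z₂ := B ∪ {y}`.
Then for both `i ∈ {1,2}`, the graph `G/Z_i` obtained by contracting each connected
component of `G[Z_i]` to a single vertex has treewidth at most `2`. -/
theorem gridApex_contraction_treewidth_le_two
    (k : ℕ) (Z : Set ((Fin k × Fin k) ⊕ Fin 2)) (hZ : Z = Zone k ∨ Z = Ztwo k)
    (V' : Type) (G' : SimpleGraph V') (π : ((Fin k × Fin k) ⊕ Fin 2) → V')
    (hc : IsComponentContraction (gridApex k) Z G' π) :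
    TreewidthLE G' 2 := by
  rcases hZ with rfl | rfl
  · refine treewidth_helper k 0 _ ?_ V' G' π hc
    intro v
    simp only [Zone, gridEven, Set.mem_union, Set.mem_setOf_eq, Set.mem_singleton_iff,
      Fin.val_zero]
  · refine treewidth_helper k 1 _ ?_ V' G' π hc
    intro v
    simp only [Ztwo, gridOdd, Set.mem_union, Set.mem_setOf_eq, Set.mem_singleton_iff,
      Fin.val_one]
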